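/- Fix n ≥ 3, 2 ≤ i ≤ n−1, and α, β ≥ 0 with (−1+ε)α + c ≤ β. Let x ∈ ℝ^n with y := Wx + θ satisfy: y_{i−1} = β (respectively y_{i+1} = β); y_i ≥ α; y_{i+1} ≤ β (respectively y_{i−1} ≤ β); and y_k ≤ 0 for all k ∉ {i−1, i, i+1}. Then w_{i−1}^⊤(−x + [y]_+) = c − β + (−1+ε)[y_i]_+ + (−1−δ)[y_{i+1}]_+ ≤ 0 (respectively w_{i+1}^⊤(−x + [y]_+) = c − β + (−1+ε)[y_i]_+ + (−1−δ)[y_{i−1}]_+ ≤ 0), where w_j^⊤ denotes the j-th row of W. (This shows the vector field points inward on the boundaries {y_{i±1} = β} of R_FI^{(i)}.) -/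

import Mathlib

open Matrix

lemma cstln_sum_helper (n i : ℕ) (hi1 : 1 ≤ i) (hi2 : i + 2 ≤ n)
    (W : Matrix (Fin n) (Fin n) ℝ) (c : ℝ) (x y : Fin n → ℝ)
    (hy : ∀ k, y k = W.mulVec x k + c)
    (hoff : ∀ k : Fin n, (k : ℕ) ≠ i - 1 → (k : ℕ) ≠ i → (k : ℕ) ≠ i + 1 → y k ≤ 0)
    (p : Fin n) :
    (∑ j, W p j * (-(x j) + max (y j) 0)) =
      c - y p + (W p ⟨i - 1, by omega⟩ * max (y ⟨i - 1, by omega⟩) 0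
        + W p ⟨i, by omega⟩ * max (y ⟨i, by omega⟩) 0
        + W p ⟨i + 1, by omega⟩ * max (y ⟨i + 1, by omega⟩) 0) := by
  have hp := hy p
  simp only [mulVec, dotProduct] at hp
  have h1 : (∑ j, W p j * (-(x j) + max (y j) 0))
      = -(∑ j, W p j * x j) + ∑ j, W p j * max (y j) 0 := by
    rw [← Finset.sum_neg_distrib, ← Finset.sum_add_distrib]
    apply Finset.sum_congr rfl
    intro j _
    ring
  have h2 : (∑ j, W p j * max (y j) 0)
      = ∑ j ∈ ({⟨i - 1, by omega⟩, ⟨i, by omega⟩, ⟨i + 1, by omega⟩} : Finset (Fin n)),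
          W p j * max (y j) 0 := by
    symm
    apply Finset.sum_subset (Finset.subset_univ _)
    intro k _ hk
    simp only [Finset.mem_insert, Finset.mem_singleton, Fin.ext_iff] at hk
    push_neg at hk
    have hk0 : y k ≤ 0 := hoff k hk.1 hk.2.1 hk.2.2
    rw [max_eq_right hk0, mul_zero]
  have h3 : (∑ j ∈ ({⟨i - 1, by omega⟩, ⟨i, by omega⟩, ⟨i + 1, by omega⟩} : Finset (Fin n)),
        W p j * max (y j) 0)
      = W p ⟨i - 1, by omega⟩ * max (y ⟨i - 1, by omega⟩) 0
        + W p ⟨i, by omega⟩ * max (y ⟨i, by omega⟩) 0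
        + W p ⟨i + 1, by omega⟩ * max (y ⟨i + 1, by omega⟩) 0 := by
    rw [Finset.sum_insert (by simp only [Finset.mem_insert, Finset.mem_singleton, Fin.ext_iff]; omega),
        Finset.sum_insert (by simp only [Finset.mem_singleton, Fin.ext_iff]; omega),
        Finset.sum_singleton]
    ring
  rw [h1, h2, h3]
  linarith

/-- vector field points inward on the boundaries `y_{i±1} = β` of
`R_FI^{(i)}`. Indices are 0-based: `1 ≤ i` and `i + 1 < n` correspond to the
1-based statement `2 ≤ i ≤ n−1`. Both cases (boundary at `i−1`, respectively
`i+1`) are stated. -/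
theorem cstln_inward_on_beta_boundaries (n i : ℕ) (hn : 3 ≤ n)
    (hi1 : 1 ≤ i) (hi2 : i + 1 < n)
    (ε δ c : ℝ) (hε : 0 < ε) (hε1 : ε < 1) (hδ : 0 < δ) (hc : 0 < c)
    (W : Matrix (Fin n) (Fin n) ℝ)
    (hW : ∀ k l : Fin n, W k l =
      if (k : ℕ) = (l : ℕ) then 0
      else if ((k : ℤ) - (l : ℤ)).natAbs = 1 then -1 + ε else -1 - δ)
    (α β : ℝ) (hα : 0 ≤ α) (hβ : 0 ≤ β)
    (hfeas : (-1 + ε) * α + c ≤ β)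
    (x y : Fin n → ℝ) (hy : ∀ k, y k = W.mulVec x k + c)
    (hyi : α ≤ y ⟨i, by omega⟩)
    (hoff : ∀ k : Fin n, (k : ℕ) ≠ i - 1 → (k : ℕ) ≠ i → (k : ℕ) ≠ i + 1 → y k ≤ 0) :
    -- case `y_{i−1} = β`
    ((y ⟨i - 1, by omega⟩ = β ∧ y ⟨i + 1, by omega⟩ ≤ β) →
      ((∑ j, W ⟨i - 1, by omega⟩ j * (-(x j) + max (y j) 0)) =
        c - β + (-1 + ε) * max (y ⟨i, by omega⟩) 0
          + (-1 - δ) * max (y ⟨i + 1, by omega⟩) 0 ∧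
       (∑ j, W ⟨i - 1, by omega⟩ j * (-(x j) + max (y j) 0)) ≤ 0)) ∧
    -- case `y_{i+1} = β`
    ((y ⟨i + 1, by omega⟩ = β ∧ y ⟨i - 1, by omega⟩ ≤ β) →
      ((∑ j, W ⟨i + 1, by omega⟩ j * (-(x j) + max (y j) 0)) =
        c - β + (-1 + ε) * max (y ⟨i, by omega⟩) 0
          + (-1 - δ) * max (y ⟨i - 1, by omega⟩) 0 ∧
       (∑ j, W ⟨i + 1, by omega⟩ j * (-(x j) + max (y j) 0)) ≤ 0)) := by
  -- matrix entries
  have hWaa : W ⟨i - 1, by omega⟩ ⟨i - 1, by omega⟩ = 0 := by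
    rw [hW]
    exact if_pos rfl
  have hWcc : W ⟨i + 1, by omega⟩ ⟨i + 1, by omega⟩ = 0 := by
    rw [hW]
    exact if_pos rfl
  have hWab : W ⟨i - 1, by omega⟩ ⟨i, by omega⟩ = -1 + ε := by
    rw [hW]
    show (if (i - 1 : ℕ) = i then (0:ℝ)
      else if (((i - 1 : ℕ) : ℤ) - ((i : ℕ) : ℤ)).natAbs = 1 then -1 + ε else -1 - δ) = -1 + ε
    rw [if_neg (by omega), if_pos (by omega)]
  have hWac : W ⟨i - 1, by omega⟩ ⟨i + 1, by omega⟩ = -1 - δ := by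
    rw [hW]
    show (if (i - 1 : ℕ) = i + 1 then (0:ℝ)
      else if (((i - 1 : ℕ) : ℤ) - ((i + 1 : ℕ) : ℤ)).natAbs = 1 then -1 + ε else -1 - δ) = -1 - δ
    rw [if_neg (by omega), if_neg (by omega)]
  have hWcb : W ⟨i + 1, by omega⟩ ⟨i, by omega⟩ = -1 + ε := by
    rw [hW]
    show (if (i + 1 : ℕ) = i then (0:ℝ)
      else if (((i + 1 : ℕ) : ℤ) - ((i : ℕ) : ℤ)).natAbs = 1 then -1 + ε else -1 - δ) = -1 + ε
    rw [if_neg (by omega), if_pos (by omega)]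
  have hWca : W ⟨i + 1, by omega⟩ ⟨i - 1, by omega⟩ = -1 - δ := by
    rw [hW]
    show (if (i + 1 : ℕ) = i - 1 then (0:ℝ)
      else if (((i + 1 : ℕ) : ℤ) - ((i - 1 : ℕ) : ℤ)).natAbs = 1 then -1 + ε else -1 - δ) = -1 - δ
    rw [if_neg (by omega), if_neg (by omega)]
  have hmaxb : max (y ⟨i, by omega⟩) 0 = y ⟨i, by omega⟩ :=
    max_eq_left (le_trans hα hyi)
  have hkey : (-1 + ε) * max (y ⟨i, by omega⟩) 0 ≤ (-1 + ε) * α := by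
    rw [hmaxb]
    nlinarith
  constructor
  · rintro ⟨hya, hyc⟩
    have hs := cstln_sum_helper n i hi1 (by omega) W c x y hy hoff ⟨i - 1, by omega⟩
    rw [hWaa, hWab, hWac, hya] at hs
    constructor
    · rw [hs]; ring
    · rw [hs]
      have hm : (0:ℝ) ≤ max (y ⟨i + 1, by omega⟩) 0 := le_max_right _ _
      nlinarith
  · rintro ⟨hyc, hya⟩
    have hs := cstln_sum_helper n i hi1 (by omega) W c x y hy hoff ⟨i + 1, by omega⟩
    rw [hWcc, hWcb, hWca, hyc] at hs
    constructor
    · rw [hs]; ring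
    · rw [hs]
      have hm : (0:ℝ) ≤ max (y ⟨i - 1, by omega⟩) 0 := le_max_right _ _
      nlinarith
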